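/- Let q = 6 + 2√5 and ψ₅(x,y) = x⁵ − (50+20√5)x³y² + (225+100√5)xy⁴. The zeta polynomial of ψ₅ (with respect to q) equals P₅(T) = −((2+√5)/4)·(4T − 1 + √5)·(8T² − 4√5·T + 3 − √5). -/

import Mathlib

/- STATEMENT 13: the zeta polynomial (w.r.t. q = 6+2√5) of
ψ₅ = x⁵ - (50+20√5)x³y² + (225+100√5)xy⁴ (here n = 5, d = 2) equals
P₅(T) = -((2+√5)/4)(4T - 1 + √5)(8T² - 4√5 T + 3 - √5). -/

noncomputable section

abbrev Cxy : Type := MvPolynomial (Fin 2) ℂ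

/-- The formal power series expansion of `1/((1-T)(1-qT))`. -/
def geomQ (q : ℝ) : PowerSeries Cxy :=
  PowerSeries.mk fun m => algebraMap ℂ Cxy (∑ j ∈ Finset.range (m + 1), (q : ℂ) ^ j)

/-- A polynomial `P(T) ∈ ℂ[T]` viewed as a power series with coefficients in ℂ[x,y]. -/
def polyToSeries (P : Polynomial ℂ) : PowerSeries Cxy :=
  PowerSeries.mk fun m => algebraMap ℂ Cxy (P.coeff m)

/-- The power series `(y(1-T) + xT)^n`. -/
def bodySeries (n : ℕ) : PowerSeries Cxy :=
  (PowerSeries.C (MvPolynomial.X 1) * (1 - PowerSeries.X)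
    + PowerSeries.C (MvPolynomial.X 0) * PowerSeries.X) ^ n

/-- `P` is a (= the) zeta polynomial of `W` (of shape `x^n + ∑_{i=d}^n A_i x^{n-i}y^i`). -/
def IsZetaPoly (q : ℝ) (n d : ℕ) (W : Cxy) (P : Polynomial ℂ) : Prop :=
  P.degree ≤ (n - d : ℕ) ∧
  PowerSeries.coeff (n - d) (polyToSeries P * geomQ q * bodySeries n)
    = MvPolynomial.C (((q : ℂ) - 1)⁻¹) * (W - MvPolynomial.X 0 ^ n)

def sqrt5C : ℂ := (Real.sqrt 5 : ℝ)

def psi5 : Cxy :=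
  MvPolynomial.X 0 ^ 5
    - MvPolynomial.C (50 + 20 * sqrt5C) * MvPolynomial.X 0 ^ 3 * MvPolynomial.X 1 ^ 2
    + MvPolynomial.C (225 + 100 * sqrt5C) * MvPolynomial.X 0 * MvPolynomial.X 1 ^ 4

def P5 : Polynomial ℂ :=
  -(Polynomial.C ((2 + sqrt5C) / 4)) *
    (Polynomial.C 4 * Polynomial.X - Polynomial.C 1 + Polynomial.C sqrt5C) *
    (Polynomial.C 8 * Polynomial.X ^ 2 - Polynomial.C (4 * sqrt5C) * Polynomial.X
      + Polynomial.C 3 - Polynomial.C sqrt5C)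

lemma hs5 : sqrt5C ^ 2 = 5 := by
  rw [sqrt5C]
  norm_cast
  rw [Real.sq_sqrt] <;> norm_num

lemma hP5eq : P5 = Polynomial.C (-1) + Polynomial.C (4 + 2*sqrt5C) * Polynomial.X
    + Polynomial.C (14 + 6*sqrt5C) * Polynomial.X^2
    + Polynomial.C (-16 - 8*sqrt5C) * Polynomial.X^3 := by
  apply Polynomial.funext
  intro z
  simp only [P5, Polynomial.eval_mul, Polynomial.eval_add, Polynomial.eval_sub,
    Polynomial.eval_neg, Polynomial.eval_C, Polynomial.eval_X, Polynomial.eval_pow]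
  linear_combination (-1/2 + 2*z + 2*z^2 + sqrt5C/4 + sqrt5C*z) * hs5

lemma hbody : bodySeries 5 =
    PowerSeries.C ((MvPolynomial.X 1 : Cxy)^5)
    + PowerSeries.C (5*(MvPolynomial.X 1:Cxy)^4*(MvPolynomial.X 0 - MvPolynomial.X 1)) * PowerSeries.X
    + PowerSeries.C (10*(MvPolynomial.X 1:Cxy)^3*(MvPolynomial.X 0 - MvPolynomial.X 1)^2) * PowerSeries.X^2
    + PowerSeries.C (10*(MvPolynomial.X 1:Cxy)^2*(MvPolynomial.X 0 - MvPolynomial.X 1)^3) * PowerSeries.X^3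
    + PowerSeries.C (5*(MvPolynomial.X 1:Cxy)*(MvPolynomial.X 0 - MvPolynomial.X 1)^4) * PowerSeries.X^4
    + PowerSeries.C ((MvPolynomial.X 0 - MvPolynomial.X 1:Cxy)^5) * PowerSeries.X^5 := by
  simp only [bodySeries, map_sub, map_mul, map_pow, map_ofNat]
  ring

lemma hu5 : (MvPolynomial.C sqrt5C : Cxy) ^ 2 = 5 := by
  rw [← map_pow, hs5, map_ofNat]

lemma hfac : psi5 - MvPolynomial.X 0 ^ 5
    = MvPolynomial.C (5 + 2*sqrt5C) *
      (MvPolynomial.C (-10:ℂ) * (MvPolynomial.X 0:Cxy)^3 * (MvPolynomial.X 1)^2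
        + MvPolynomial.C (25+10*sqrt5C) * MvPolynomial.X 0 * (MvPolynomial.X 1)^4) := by
  simp only [psi5, map_add, map_mul, map_ofNat, map_neg]
  linear_combination (-20 * MvPolynomial.X 0 * (MvPolynomial.X 1:Cxy)^4) * hu5

set_option maxHeartbeats 1600000 in
theorem zeta_poly_of_psi5 : IsZetaPoly (6 + 2 * Real.sqrt 5) 5 2 psi5 P5 := by
  have hq1 : ((6 + 2*Real.sqrt 5 : ℝ) : ℂ) = 6 + 2*sqrt5C := by
    rw [sqrt5C]; push_cast; ring
  have hdeg : P5.degree ≤ 3 := by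
    rw [hP5eq]; compute_degree
  constructor
  · exact_mod_cast hdeg
  · have hne : (5 + 2*sqrt5C : ℂ) ≠ 0 := by
      have h : (5 + 2*Real.sqrt 5 : ℝ) ≠ 0 := by positivity
      rw [sqrt5C]
      exact_mod_cast h
    have hinvc : ((((6 + 2*Real.sqrt 5 : ℝ) : ℂ)) - 1)⁻¹ * (5 + 2*sqrt5C) = 1 := by
      rw [hq1, show (6 + 2*sqrt5C - 1 : ℂ) = 5 + 2*sqrt5C by ring]
      exact inv_mul_cancel₀ hne
    rw [show (5-2 : ℕ) = 3 from rfl, hfac, ← mul_assoc, ← map_mul, hinvc, map_one, one_mul]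
    have hcoeff : ∀ m : ℕ, P5.coeff m =
        [(-1 : ℂ), 4 + 2*sqrt5C, 14 + 6*sqrt5C, -16 - 8*sqrt5C].getD m 0 := by
      intro m
      rw [hP5eq]
      match m with
      | 0 | 1 | 2 | 3 =>
        simp only [Polynomial.coeff_add, Polynomial.coeff_C_mul, Polynomial.coeff_X_pow,
          Polynomial.coeff_C, Polynomial.coeff_X, List.getD]
        norm_num
      | (n+4) =>
        rw [← hP5eq]
        have h34 : (3 : WithBot ℕ) < ((n+4 : ℕ) : WithBot ℕ) := by
          exact_mod_cast (by omega : (3:ℕ) < n+4)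
        rw [Polynomial.coeff_eq_zero_of_degree_lt (lt_of_le_of_lt hdeg h34)]
        simp
    rw [hbody, PowerSeries.coeff_mul]
    simp only [Finset.Nat.sum_antidiagonal_eq_sum_range_succ_mk, PowerSeries.coeff_mul,
      Finset.sum_range_succ, Finset.sum_range_zero]
    simp only [polyToSeries, geomQ, PowerSeries.coeff_mk, map_add,
      PowerSeries.coeff_C_mul_X_pow, PowerSeries.coeff_C, PowerSeries.coeff_C_mul,
      PowerSeries.coeff_X, PowerSeries.coeff_X_pow, hcoeff,
      MvPolynomial.algebraMap_eq, List.getD]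
    norm_num [Finset.sum_range_succ, hq1]
    simp only [map_add, map_mul, map_pow, map_ofNat, map_neg, map_sub, map_one]
    linear_combination (4 * (MvPolynomial.X 1 : Cxy)^5) * hu5


end
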